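/- Let k ≥ 6 and let w be a ((k−2)/(k−3))⁺-A-free word over the alphabet Fin k. Then every factor of w of length k−3 has pairwise distinct letters (is a (k−3)-permutation). -/

import Mathlib

/-- `x` is a factor (contiguous subword) of `w`. -/
def IsFactor {A : Type*} (x w : List A) : Prop := ∃ p s, w = p ++ x ++ s

/-- `w` is a strong Abelian `β`-power: `w = u₁ ++ u₂ ++ ⋯ ++ u_k ++ u'` where
`k = ⌊β⌋`, `u₁ ≠ []`, all `uᵢ` are Abelian equivalent (permutations of each other),
`u'` is Abelian equivalent to the prefix of `u₁` of length `|u'| < |u₁|`,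
and `|w| = β·|u₁|`. -/
def IsStrongAPower {A : Type*} (β : ℚ) (w : List A) : Prop :=
  ∃ (u₁ : List A) (us : List (List A)) (u' : List A),
    u₁ ≠ [] ∧
    ((us.length : ℤ) + 1 = ⌊β⌋) ∧
    (∀ u ∈ us, u.Perm u₁) ∧
    u'.length < u₁.length ∧
    u'.Perm (u₁.take u'.length) ∧
    w = (u₁ :: us).flatten ++ u' ∧
    ((w.length : ℚ) = β * u₁.length)

/-- `w` is `β`-A-free: no factor of `w` is a strong Abelian `γ`-power for a rational `γ ≥ β`. -/
def AFree {A : Type*} (β : ℚ) (w : List A) : Prop :=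
  ∀ x, IsFactor x w → ∀ γ : ℚ, β ≤ γ → ¬ IsStrongAPower γ x

/-- `w` is `β⁺`-A-free: no factor of `w` is a strong Abelian `γ`-power for a rational `γ > β`. -/
def APlusFree {A : Type*} (β : ℚ) (w : List A) : Prop :=
  ∀ x, IsFactor x w → ∀ γ : ℚ, β < γ → ¬ IsStrongAPower γ x

lemma not_nodup_split {A : Type*} {l : List A} (h : ¬ l.Nodup) :
    ∃ (p q r : List A) (a : A), l = p ++ a :: q ++ a :: r := by
  induction l with
  | nil => simp at h
  | cons b t ih =>
    by_cases hb : b ∈ t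
    · obtain ⟨s, t', rfl⟩ := List.append_of_mem hb
      exact ⟨[], s, t', b, by simp⟩
    · rw [List.nodup_cons] at h
      push_neg at h
      obtain ⟨p, q, r, a, rfl⟩ := ih (h hb)
      exact ⟨b :: p, q, r, a, by simp⟩

theorem statement_3 (k : ℕ) (hk : 6 ≤ k) (w : List (Fin k))
    (hw : APlusFree (((k : ℚ) - 2) / ((k : ℚ) - 3)) w)
    (x : List (Fin k)) (hx : IsFactor x w) (hlen : x.length = k - 3) :
    x.Nodup := by
  by_contra hnd
  obtain ⟨p, q, r, a, rfl⟩ := not_nodup_split hnd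
  obtain ⟨P, S, rfl⟩ := hx
  have hfac : IsFactor (a :: q ++ [a]) (P ++ (p ++ a :: q ++ a :: r) ++ S) := by
    refine ⟨P ++ p, r ++ S, ?_⟩
    simp
  have hk3 : (0:ℚ) < (k:ℚ) - 3 := by
    have : (6:ℚ) ≤ (k:ℚ) := by exact_mod_cast hk
    linarith
  rcases List.eq_nil_or_concat q with hq | ⟨_, _, hq⟩
  · subst hq
    refine hw _ hfac 2 ?_ ⟨[a], [[a]], [], by simp, by norm_num, by simp, by simp,
      by simp, by simp, by norm_num⟩
    rw [div_lt_iff₀ hk3]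
    have : (6:ℚ) ≤ (k:ℚ) := by exact_mod_cast hk
    linarith
  · have hqne : q ≠ [] := by rintro rfl; simp at hq
    set n : ℕ := q.length with hn
    have hn1 : 1 ≤ n := by
      rcases q with _ | ⟨b, t⟩
      · exact absurd rfl hqne
      · simp [hn]
    have hlenx : n + 2 ≤ k - 3 := by
      rw [← hlen]
      simp [hn]
      omega
    have hnk : (n:ℚ) + 2 ≤ (k:ℚ) - 3 := by
      have h3 : 3 ≤ k := by omega
      have := (Nat.cast_le (α := ℚ)).2 hlenx
      rwa [Nat.cast_sub h3, Nat.cast_add] at this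
    set γ : ℚ := ((n:ℚ) + 2) / ((n:ℚ) + 1) with hγ
    have hnpos : (0:ℚ) < (n:ℚ) + 1 := by positivity
    have hγ1 : 1 < γ := by
      rw [hγ, lt_div_iff₀ hnpos]; linarith
    have hγ2 : γ < 2 := by
      rw [hγ, div_lt_iff₀ hnpos]
      have : (1:ℚ) ≤ (n:ℚ) := by exact_mod_cast hn1
      linarith
    refine hw _ hfac γ ?_ ⟨a :: q, [], [a], by simp, ?_, by simp, ?_, by simp, by simp, ?_⟩
    · rw [div_lt_div_iff₀ hk3 hnpos]
      nlinarith
    · have hfl : ⌊γ⌋ = 1 := by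
        refine Int.floor_eq_iff.mpr ⟨?_, ?_⟩
        · push_cast; linarith
        · push_cast; linarith
      simp [hfl]
    · simp only [List.length_cons, List.length_singleton]
      exact Nat.succ_lt_succ hn1
    · have hne : ((n:ℚ) + 1) ≠ 0 := ne_of_gt hnpos
      have hlq : ((a :: q).length : ℚ) = (n:ℚ) + 1 := by simp [hn]
      simp only [List.length_append, List.length_cons, hγ]
      push_cast [← hn]
      field_simp
      ring_nf
      simp
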